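/- Let α ∈ (−1/2, 1/2) and γ ∈ [0,1), and let 0 < a < b < ∞. Then there exist constants 0 < c ≤ C < ∞ such that for all s, t ∈ [a,b] with s < t one has c · (t−s)^{2α+1} ≤ Φ(s,t) ≤ C · (t−s)^{2α+1}. -/

import Mathlib

open Set MeasureTheory intervalIntegral Real

section helpers

lemma rpow_sq' {x : ℝ} (hx : 0 ≤ x) (p : ℝ) : (x ^ p) ^ 2 = x ^ (2 * p) := by
  rw [← Real.rpow_natCast (x ^ p) 2, ← Real.rpow_mul hx]
  norm_num [mul_comm]

lemma rpow_le_max {l x r p : ℝ} (hl : 0 < l) (hlx : l ≤ x) (hxr : x ≤ r) :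
    x ^ p ≤ max (l ^ p) (r ^ p) := by
  rcases le_or_gt 0 p with hp | hp
  · exact le_max_of_le_right (Real.rpow_le_rpow (hl.le.trans hlx) hxr hp)
  · exact le_max_of_le_left (Real.rpow_le_rpow_of_nonpos hl hlx hp.le)

lemma integrableOn_rpow_Ioo {q x : ℝ} (hq : -1 < q) :
    IntegrableOn (fun u : ℝ => u ^ q) (Ioo 0 x) := by
  have h := (intervalIntegrable_rpow' (a := 0) (b := x) hq)
  rcases le_or_gt 0 x with hx | hx
  · exact ((intervalIntegrable_iff_integrableOn_Ioc_of_le hx).1 h).mono_set Ioo_subset_Ioc_self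
  · simp [Ioo_eq_empty (by linarith : ¬ (0:ℝ) < x)]

lemma integral_rpow_Ioo {q x : ℝ} (hq : -1 < q) (hx : 0 ≤ x) :
    ∫ u in Ioo (0:ℝ) x, u ^ q = x ^ (q + 1) / (q + 1) := by
  rw [← integral_Ioc_eq_integral_Ioo, ← intervalIntegral.integral_of_le hx,
    integral_rpow (Or.inl hq), Real.zero_rpow (by linarith)]
  ring

lemma integrableOn_sub_rpow_Ioo {p l r : ℝ} (hp : -1 < p) (hlr : l ≤ r) :
    IntegrableOn (fun u : ℝ => (r - u) ^ p) (Ioo l r) := by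
  have h := (intervalIntegrable_rpow' (a := 0) (b := r - l) hp).comp_sub_left r
  simp only [sub_zero, sub_sub_cancel] at h
  exact ((intervalIntegrable_iff_integrableOn_Ioc_of_le hlr).1 h.symm).mono_set
    Ioo_subset_Ioc_self

lemma integral_sub_rpow_Ioo {p l r : ℝ} (hp : -1 < p) (hlr : l ≤ r) :
    ∫ u in Ioo l r, (r - u) ^ p = (r - l) ^ (p + 1) / (p + 1) := by
  rw [← integral_Ioc_eq_integral_Ioo, ← intervalIntegral.integral_of_le hlr]
  rw [intervalIntegral.integral_comp_sub_left (fun x : ℝ => x ^ p) r, sub_self]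
  rw [integral_rpow (Or.inl hp), Real.zero_rpow (by linarith)]
  ring

lemma integrableOn_sub_rpow_Ico {p l w s : ℝ} (hlw : l ≤ w) (hws : w < s) :
    IntegrableOn (fun u : ℝ => (s - u) ^ p) (Ico l w) := by
  have h0 : (0:ℝ) ∉ Set.uIcc (s - w) (s - l) := by
    rw [Set.uIcc_of_le (by linarith)]
    intro hmem
    have := hmem.1
    simp at this; linarith
  have h := (intervalIntegrable_rpow (r := p) (a := s - w) (b := s - l) (Or.inr h0)).comp_sub_left s
  simp only [sub_sub_cancel] at h
  rw [integrableOn_Ico_iff_integrableOn_Ioo]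
  exact ((intervalIntegrable_iff_integrableOn_Ioc_of_le hlw).1 h.symm).mono_set
    Ioo_subset_Ioc_self

lemma integral_sub_rpow_Ico {p l w s : ℝ} (hp : p ≠ -1) (hlw : l ≤ w) (hws : w < s) :
    ∫ u in Ico l w, (s - u) ^ p = ((s - l) ^ (p + 1) - (s - w) ^ (p + 1)) / (p + 1) := by
  rw [integral_Ico_eq_integral_Ioo, ← integral_Ioc_eq_integral_Ioo,
    ← intervalIntegral.integral_of_le hlw,
    intervalIntegral.integral_comp_sub_left (fun x : ℝ => x ^ p) s]
  have h0 : (0:ℝ) ∉ Set.uIcc (s - w) (s - l) := by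
    rw [Set.uIcc_of_le (by linarith)]
    intro hmem
    have := hmem.1
    simp at this; linarith
  rw [integral_rpow (Or.inr ⟨hp, h0⟩)]

lemma abs_rpow_sub_rpow_le {α x y : ℝ} (hα : α < 1) (hy : 0 < y) (hxy : y ≤ x) :
    |x ^ α - y ^ α| ≤ |α| * ((x - y) * y ^ (α - 1)) := by
  rcases eq_or_ne α 0 with rfl | hα0
  · simp
  have hx : 0 < x := hy.trans_le hxy
  have h0 : (0:ℝ) ∉ Set.uIcc y x := by
    rw [Set.uIcc_of_le hxy]
    intro hmem; exact absurd hmem.1 (by linarith)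
  have hval : ∫ u in y..x, u ^ (α - 1) = (x ^ α - y ^ α) / α := by
    rw [integral_rpow (Or.inr ⟨by intro h; apply hα0; linarith, h0⟩)]
    norm_num
  have hint : IntervalIntegrable (fun u : ℝ => u ^ (α - 1)) volume y x :=
    intervalIntegrable_rpow (Or.inr h0)
  have hint2 : IntervalIntegrable (fun _ : ℝ => y ^ (α - 1)) volume y x :=
    intervalIntegrable_const
  have hmono : ∫ u in y..x, u ^ (α - 1) ≤ ∫ _ in y..x, y ^ (α - 1) := by
    apply intervalIntegral.integral_mono_on hxy hint hint2
    intro u hu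
    exact Real.rpow_le_rpow_of_nonpos hy hu.1 (by linarith)
  have hnn : 0 ≤ ∫ u in y..x, u ^ (α - 1) := by
    apply intervalIntegral.integral_nonneg hxy
    intro u hu
    exact Real.rpow_nonneg (by linarith [hu.1]) _
  have hconst : ∫ _ in y..x, y ^ (α - 1) = (x - y) * y ^ (α - 1) := by
    simp [smul_eq_mul]
  have : |x ^ α - y ^ α| = |α| * |∫ u in y..x, u ^ (α - 1)| := by
    rw [← abs_mul, hval]
    field_simp
  rw [this, abs_of_nonneg hnn]
  have := hmono.trans_eq hconst
  exact mul_le_mul_of_nonneg_left this (abs_nonneg α)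
end helpers

/-- The second-moment function
`Φ(s,t) = ∫₀^s ((t-u)^α - (s-u)^α)² u^{-γ} du + ∫_s^t (t-u)^{2α} u^{-γ} du`,
which equals `E[(Z(t)-Z(s))²]` for the generalized Riemann–Liouville FBM `Z`. -/
noncomputable def Phi (α γ s t : ℝ) : ℝ :=
  (∫ u in Set.Ioo (0:ℝ) s, ((t-u) ^ α - (s-u) ^ α)^2 * u ^ (-γ)) +
    ∫ u in Set.Ioo s t, (t-u) ^ (2*α) * u ^ (-γ)

set_option maxHeartbeats 1000000 in
/-- For `α ∈ (-1/2,1/2)`: `Φ(s,t) ≍ (t-s)^{2α+1}` uniformly on `[a,b]`. -/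
theorem Z_increment_bound_interval (α γ : ℝ)
    (hα1 : -(1/2) < α) (hα2 : α < 1/2) (hγ0 : 0 ≤ γ) (hγ1 : γ < 1)
    (a b : ℝ) (ha : 0 < a) (hab : a < b) :
    ∃ c C : ℝ, 0 < c ∧ c ≤ C ∧
      ∀ s t : ℝ, a ≤ s → s < t → t ≤ b →
        c * (t-s) ^ (2*α+1) ≤ Phi α γ s t ∧
        Phi α γ s t ≤ C * (t-s) ^ (2*α+1) := by
  have h2α1 : (0:ℝ) < 2*α+1 := by linarith
  have h12α : (0:ℝ) < 1-2*α := by linarith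
  have h1γ : (0:ℝ) < 1-γ := by linarith
  have ha2 : (0:ℝ) < a/2 := by linarith
  have hb : (0:ℝ) < b := by linarith
  have hab2 : (0:ℝ) < a/(2*b) := by positivity
  set CB1 := α^2 * (a/2) ^ (2*α-2) * ((a/2) ^ (1-γ) / (1-γ)) * b ^ (1-2*α) with hCB1
  set CB2 := α^2 * (a/2) ^ (-γ) * ((a/(2*b)) ^ (2*α-1)) / (1-2*α) with hCB2
  set CA := (a/2) ^ (-γ) * (4 + 2/(2*α+1)) with hCA
  set C2 := a ^ (-γ) / (2*α+1) with hC2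
  refine ⟨b ^ (-γ) / (2*α+1), CB1 + CB2 + CA + C2, by positivity, ?_, ?_⟩
  · have h1 : b ^ (-γ) / (2*α+1) ≤ C2 := by
      rw [hC2]
      exact (div_le_div_iff_of_pos_right h2α1).2 <| Real.rpow_le_rpow_of_nonpos ha hab.le (neg_nonpos.2 hγ0)
    have h2 : 0 ≤ CB1 := by positivity
    have h3 : 0 ≤ CB2 := by positivity
    have h4 : 0 ≤ CA := by positivity
    linarith
  intro s t hs hst ht
  have hs0 : 0 < s := ha.trans_le hs
  have ht0 : 0 < t := hs0.trans hst
  have hδ : 0 < t - s := by linarith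
  have hsb : s ≤ b := le_of_lt (hst.trans_le ht)
  have hδb : t - s ≤ b := by linarith
  set δ := t - s with hδdef
  set ρ := min δ (s/2) with hρdef
  have hρ : 0 < ρ := lt_min hδ (by linarith)
  have hρδ : ρ ≤ δ := min_le_left _ _
  set w := s - ρ with hwdef
  have hws : w < s := by simp only [hwdef]; linarith
  have haw : a/2 ≤ w := by
    have : ρ ≤ s/2 := min_le_right _ _
    simp only [hwdef]; linarith
  have hw0 : 0 < w := lt_of_lt_of_le ha2 haw
  -- nonnegativity of F
  set F : ℝ → ℝ := fun u => ((t-u) ^ α - (s-u) ^ α)^2 * u ^ (-γ) with hFdef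
  have hFnn : ∀ u : ℝ, 0 < u → 0 ≤ F u := fun u hu =>
    mul_nonneg (sq_nonneg _) (Real.rpow_nonneg hu.le _)
  have hFcont : ContinuousOn F (Ioo (0:ℝ) s) := by
    apply ContinuousOn.mul
    · apply ContinuousOn.pow
      apply ContinuousOn.sub
      · exact (continuous_const.sub continuous_id).continuousOn.rpow_const
          fun x hx => Or.inl (ne_of_gt (by simp only [Pi.sub_apply, id_eq]; linarith [hx.2]))
      · exact (continuous_const.sub continuous_id).continuousOn.rpow_const
          fun x hx => Or.inl (ne_of_gt (by simp only [Pi.sub_apply, id_eq]; linarith [hx.2]))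
    · exact continuousOn_id.rpow_const fun x hx => Or.inl (ne_of_gt hx.1)
  have hFm : ∀ r : Set ℝ, MeasurableSet r → r ⊆ Ioo (0:ℝ) s →
      AEStronglyMeasurable F (volume.restrict r) := fun r hr hsub =>
    (hFcont.mono hsub).aestronglyMeasurable hr
  -- second integral bounds
  have hI2int : IntegrableOn (fun u : ℝ => (t-u) ^ (2*α) * u ^ (-γ)) (Ioo s t) := by
    apply Integrable.mono' (g := fun u : ℝ => a ^ (-γ) * (t-u) ^ (2*α))
      ((integrableOn_sub_rpow_Ioo (by linarith) hst.le).const_mul _)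
      (ContinuousOn.aestronglyMeasurable (ContinuousOn.mul
        ((continuous_const.sub continuous_id).continuousOn.rpow_const
          fun x hx => Or.inl (ne_of_gt (by simp only [Pi.sub_apply, id_eq]; linarith [hx.2])))
        (continuousOn_id.rpow_const fun x hx => Or.inl (ne_of_gt (hs0.trans hx.1))))
        measurableSet_Ioo)
    filter_upwards [ae_restrict_mem measurableSet_Ioo] with u hu
    have hu0 : 0 < u := hs0.trans hu.1
    have htu : 0 ≤ t - u := by linarith [hu.2]
    simp only [Pi.mul_apply, Pi.sub_apply, id_eq, Real.norm_eq_abs]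
    rw [abs_of_nonneg (mul_nonneg (Real.rpow_nonneg htu _)
      (Real.rpow_nonneg hu0.le _))]
    rw [mul_comm]
    apply mul_le_mul_of_nonneg_right ?_ (Real.rpow_nonneg htu _)
    exact Real.rpow_le_rpow_of_nonpos ha (hs.trans hu.1.le) (neg_nonpos.2 hγ0)
  have hI2low : b ^ (-γ) / (2*α+1) * δ ^ (2*α+1) ≤
      ∫ u in Ioo s t, (t-u) ^ (2*α) * u ^ (-γ) := by
    have hmono : ∫ u in Ioo s t, b ^ (-γ) * (t-u) ^ (2*α) ≤
        ∫ u in Ioo s t, (t-u) ^ (2*α) * u ^ (-γ) := by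
      apply setIntegral_mono_on
        ((integrableOn_sub_rpow_Ioo (by linarith) hst.le).const_mul _) hI2int
        measurableSet_Ioo
      intro u hu
      have hu0 : 0 < u := hs0.trans hu.1
      have htu : 0 ≤ t - u := by linarith [hu.2]
      rw [mul_comm (b ^ (-γ))]
      apply mul_le_mul_of_nonneg_left ?_ (Real.rpow_nonneg htu _)
      exact Real.rpow_le_rpow_of_nonpos hu0 (le_trans hu.2.le ht) (neg_nonpos.2 hγ0)
    refine le_trans (le_of_eq ?_) hmono
    rw [MeasureTheory.integral_const_mul, integral_sub_rpow_Ioo (by linarith) hst.le]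
    rw [show 2*α + 1 = 2*α + 1 from rfl]
    ring
  have hI2high : (∫ u in Ioo s t, (t-u) ^ (2*α) * u ^ (-γ)) ≤ C2 * δ ^ (2*α+1) := by
    have hmono : (∫ u in Ioo s t, (t-u) ^ (2*α) * u ^ (-γ)) ≤
        ∫ u in Ioo s t, a ^ (-γ) * (t-u) ^ (2*α) := by
      apply setIntegral_mono_on hI2int
        ((integrableOn_sub_rpow_Ioo (by linarith) hst.le).const_mul _)
        measurableSet_Ioo
      intro u hu
      have hu0 : 0 < u := hs0.trans hu.1
      have htu : 0 ≤ t - u := by linarith [hu.2]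
      rw [mul_comm (a ^ (-γ))]
      apply mul_le_mul_of_nonneg_left ?_ (Real.rpow_nonneg htu _)
      exact Real.rpow_le_rpow_of_nonpos ha (hs.trans hu.1.le) (neg_nonpos.2 hγ0)
    refine hmono.trans (le_of_eq ?_)
    rw [MeasureTheory.integral_const_mul, integral_sub_rpow_Ioo (by linarith) hst.le, hC2]
    ring
  have hI1nn : 0 ≤ ∫ u in Ioo (0:ℝ) s, F u :=
    setIntegral_nonneg measurableSet_Ioo fun u hu => hFnn u hu.1
  constructor
  · have : Phi α γ s t = (∫ u in Ioo (0:ℝ) s, F u) +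
        ∫ u in Ioo s t, (t-u) ^ (2*α) * u ^ (-γ) := rfl
    rw [this]
    linarith [hI2low]
  · -- upper bound
    have hsu_subB2 : Ico (a/2) w ⊆ Ioo (0:ℝ) s := fun x hx =>
      ⟨lt_of_lt_of_le ha2 hx.1, lt_trans hx.2 hws⟩
    have hsu_subA : Ico w s ⊆ Ioo (0:ℝ) s := fun x hx =>
      ⟨lt_of_lt_of_le hw0 hx.1, hx.2⟩
    have hsu_subB1 : Ioo (0:ℝ) (a/2) ⊆ Ioo (0:ℝ) s :=
      Ioo_subset_Ioo_right (by linarith)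
    -- pointwise bounds
    have claimB : ∀ u : ℝ, 0 < u → u < w →
        F u ≤ α^2 * δ^2 * (s-u) ^ (2*α-2) * u ^ (-γ) := by
      intro u hu0 huw
      have hsu : 0 < s - u := by linarith
      have hsut : s - u ≤ t - u := by linarith
      have h1 := abs_rpow_sub_rpow_le (by linarith : α < 1) hsu hsut
      have hrw : t - u - (s - u) = δ := by rw [hδdef]; ring
      rw [hrw] at h1
      have h2 : ((t-u) ^ α - (s-u) ^ α)^2 ≤ (|α| * (δ * (s-u) ^ (α-1)))^2 := by
        rw [← sq_abs ((t-u) ^ α - (s-u) ^ α)]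
        exact pow_le_pow_left₀ (abs_nonneg _) h1 2
      have h3 : (|α| * (δ * (s-u) ^ (α-1)))^2 = α^2 * δ^2 * (s-u) ^ (2*α-2) := by
        rw [mul_pow, mul_pow, sq_abs, rpow_sq' hsu.le, show 2*(α-1) = 2*α-2 by ring]
        ring
      exact mul_le_mul_of_nonneg_right (h2.trans_eq h3) (Real.rpow_nonneg hu0.le _)
    have claimB1 : ∀ u ∈ Ioo (0:ℝ) (a/2),
        F u ≤ (α^2 * δ^2 * (a/2) ^ (2*α-2)) * u ^ (-γ) := by
      intro u hu
      refine (claimB u hu.1 (lt_of_lt_of_le hu.2 haw)).trans ?_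
      apply mul_le_mul_of_nonneg_right ?_ (Real.rpow_nonneg hu.1.le _)
      apply mul_le_mul_of_nonneg_left ?_ (by positivity)
      exact Real.rpow_le_rpow_of_nonpos ha2 (by linarith [hu.2] : a/2 ≤ s - u)
        (by linarith)
    have claimB2 : ∀ u ∈ Ico (a/2) w,
        F u ≤ (α^2 * δ^2 * (a/2) ^ (-γ)) * (s-u) ^ (2*α-2) := by
      intro u hu
      have hsu0 : (0:ℝ) ≤ s - u := by linarith [hu.2, hws]
      have h2 : α ^ 2 * δ ^ 2 * (s-u) ^ (2*α-2) * u ^ (-γ)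
          ≤ α ^ 2 * δ ^ 2 * (s-u) ^ (2*α-2) * (a/2) ^ (-γ) :=
        mul_le_mul_of_nonneg_left
          (Real.rpow_le_rpow_of_nonpos ha2 hu.1 (neg_nonpos.2 hγ0)) (by positivity)
      exact (claimB u (lt_of_lt_of_le ha2 hu.1) hu.2).trans
        (h2.trans (le_of_eq (by ring)))
    have claimA : ∀ u ∈ Ico w s,
        F u ≤ (a/2) ^ (-γ) * (4 * δ ^ (2*α) + 2 * (s-u) ^ (2*α)) := by
      intro u hu
      have hsu : 0 ≤ s - u := by linarith [hu.2]
      have htu : 0 < t - u := by linarith [hu.2]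
      have hδtu : δ ≤ t - u := by rw [hδdef]; linarith [hu.2]
      have hswρ : s - w = ρ := by rw [hwdef]; ring
      have htu2 : t - u ≤ 2 * δ := by
        have h6 : s - u ≤ ρ := by rw [← hswρ]; linarith [hu.1]
        have h7 : δ = t - s := hδdef
        linarith [h6, hρδ]
      have e1 : ((t-u) ^ α)^2 = (t-u) ^ (2*α) := rpow_sq' htu.le α
      have e2 : ((s-u) ^ α)^2 = (s-u) ^ (2*α) := rpow_sq' hsu α
      have h2 : ((t-u) ^ α - (s-u) ^ α)^2 ≤ 2*(t-u) ^ (2*α) + 2*(s-u) ^ (2*α) := by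
        nlinarith [sq_nonneg ((t-u) ^ α + (s-u) ^ α), e1, e2]
      have h3 : (t-u) ^ (2*α) ≤ 2 * δ ^ (2*α) := by
        refine (rpow_le_max hδ hδtu htu2).trans (max_le ?_ ?_)
        · linarith [Real.rpow_nonneg hδ.le (2*α)]
        · rw [Real.mul_rpow (by norm_num) hδ.le]
          apply mul_le_mul_of_nonneg_right ?_ (Real.rpow_nonneg hδ.le _)
          calc (2:ℝ) ^ (2*α) ≤ 2 ^ (1:ℝ) :=
                Real.rpow_le_rpow_of_exponent_le one_le_two (by linarith)
            _ = 2 := Real.rpow_one 2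
      have hu' : u ^ (-γ) ≤ (a/2) ^ (-γ) :=
        Real.rpow_le_rpow_of_nonpos ha2 (haw.trans hu.1) (neg_nonpos.2 hγ0)
      have hu0 : (0:ℝ) < u := lt_of_lt_of_le hw0 hu.1
      calc F u ≤ (2*(t-u) ^ (2*α) + 2*(s-u) ^ (2*α)) * ((a/2) ^ (-γ)) := by
            apply mul_le_mul h2 hu' (Real.rpow_nonneg hu0.le _) ?_
            have := Real.rpow_nonneg htu.le (2*α)
            have := Real.rpow_nonneg hsu (2*α)
            linarith
        _ ≤ (4 * δ ^ (2*α) + 2 * (s-u) ^ (2*α)) * ((a/2) ^ (-γ)) := by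
            apply mul_le_mul_of_nonneg_right ?_ (Real.rpow_nonneg ha2.le _)
            linarith [h3]
        _ = (a/2) ^ (-γ) * (4 * δ ^ (2*α) + 2 * (s-u) ^ (2*α)) := by ring
    -- integrability of dominators
    have hgB1 : IntegrableOn
        (fun u : ℝ => (α^2 * δ^2 * (a/2) ^ (2*α-2)) * u ^ (-γ)) (Ioo 0 (a/2)) :=
      (integrableOn_rpow_Ioo (by linarith)).const_mul _
    have hgB2 : IntegrableOn
        (fun u : ℝ => (α^2 * δ^2 * (a/2) ^ (-γ)) * (s-u) ^ (2*α-2)) (Ico (a/2) w) :=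
      (integrableOn_sub_rpow_Ico haw hws).const_mul _
    have hsubint : IntegrableOn (fun u : ℝ => (s-u) ^ (2*α)) (Ico w s) := by
      rw [integrableOn_Ico_iff_integrableOn_Ioo]
      exact integrableOn_sub_rpow_Ioo (by linarith) hws.le
    have hgA : IntegrableOn
        (fun u : ℝ => (a/2) ^ (-γ) * (4 * δ ^ (2*α) + 2 * (s-u) ^ (2*α))) (Ico w s) := by
      apply Integrable.const_mul
      apply Integrable.add
      · exact integrableOn_const measure_Ico_lt_top.ne
      · exact hsubint.const_mul 2
    -- integrability of F on the three regions
    have hFiB1 : IntegrableOn F (Ioo 0 (a/2)) := by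
      apply Integrable.mono' hgB1 (hFm _ measurableSet_Ioo hsu_subB1)
      filter_upwards [ae_restrict_mem measurableSet_Ioo] with u hu
      rw [Real.norm_eq_abs, abs_of_nonneg (hFnn u hu.1)]
      exact claimB1 u hu
    have hFiB2 : IntegrableOn F (Ico (a/2) w) := by
      apply Integrable.mono' hgB2 (hFm _ measurableSet_Ico hsu_subB2)
      filter_upwards [ae_restrict_mem measurableSet_Ico] with u hu
      rw [Real.norm_eq_abs, abs_of_nonneg (hFnn u (lt_of_lt_of_le ha2 hu.1))]
      exact claimB2 u hu
    have hFiA : IntegrableOn F (Ico w s) := by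
      apply Integrable.mono' hgA (hFm _ measurableSet_Ico hsu_subA)
      filter_upwards [ae_restrict_mem measurableSet_Ico] with u hu
      rw [Real.norm_eq_abs, abs_of_nonneg (hFnn u (lt_of_lt_of_le hw0 hu.1))]
      exact claimA u hu
    -- splitting the first integral
    have hsplit : ∫ u in Ioo (0:ℝ) s, F u = (∫ u in Ioo (0:ℝ) (a/2), F u)
        + (∫ u in Ico (a/2) w, F u) + ∫ u in Ico w s, F u := by
      have hunion2 : Ico (a/2) s = Ico (a/2) w ∪ Ico w s :=
        (Ico_union_Ico_eq_Ico haw hws.le).symm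
      have hunion1 : Ioo (0:ℝ) s = Ioo 0 (a/2) ∪ Ico (a/2) s :=
        (Ioo_union_Ico_eq_Ioo ha2 (by linarith : a/2 ≤ s)).symm
      have hFi23 : IntegrableOn F (Ico (a/2) s) := by
        rw [hunion2]; exact hFiB2.union hFiA
      rw [hunion1, setIntegral_union
        (Ico_disjoint_Ico_same.mono_left Ioo_subset_Ico_self) measurableSet_Ico
        hFiB1 hFi23, hunion2, setIntegral_union Ico_disjoint_Ico_same
        measurableSet_Ico hFiB2 hFiA, add_assoc]
    -- numeric keys
    have hδ2rw : (δ:ℝ)^2 = δ ^ ((2:ℝ)) := by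
      rw [← Real.rpow_natCast δ 2]; norm_num
    have hkeyB1 : (δ:ℝ)^2 ≤ b ^ (1-2*α) * δ ^ (2*α+1) := by
      have h1 : δ ^ ((2:ℝ)) = δ ^ (1-2*α) * δ ^ (2*α+1) := by
        rw [← Real.rpow_add hδ]; congr 1; ring
      rw [hδ2rw, h1]
      exact mul_le_mul_of_nonneg_right (Real.rpow_le_rpow hδ.le hδb h12α.le)
        (Real.rpow_nonneg hδ.le _)
    -- region B1 bound
    have hB1 : (∫ u in Ioo (0:ℝ) (a/2), F u) ≤ CB1 * δ ^ (2*α+1) := by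
      refine (setIntegral_mono_on hFiB1 hgB1 measurableSet_Ioo claimB1).trans ?_
      rw [MeasureTheory.integral_const_mul, integral_rpow_Ioo (by linarith) ha2.le]
      rw [show -γ + 1 = 1 - γ by ring]
      calc α^2 * δ^2 * (a/2) ^ (2*α-2) * ((a/2) ^ (1-γ) / (1-γ))
          = (α^2 * (a/2) ^ (2*α-2) * ((a/2) ^ (1-γ) / (1-γ))) * δ^2 := by ring
        _ ≤ (α^2 * (a/2) ^ (2*α-2) * ((a/2) ^ (1-γ) / (1-γ)))
              * (b ^ (1-2*α) * δ ^ (2*α+1)) := by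
            apply mul_le_mul_of_nonneg_left hkeyB1 (by positivity)
        _ = CB1 * δ ^ (2*α+1) := by rw [hCB1]; ring
    -- region B2 bound
    have hB2 : (∫ u in Ico (a/2) w, F u) ≤ CB2 * δ ^ (2*α+1) := by
      refine (setIntegral_mono_on hFiB2 hgB2 measurableSet_Ico claimB2).trans ?_
      rw [MeasureTheory.integral_const_mul, integral_sub_rpow_Ico (by intro h; rw [show (2:ℝ)*α-2 = -1 ↔ α = 1/2 by constructor <;> intro <;> linarith] at h; linarith) haw hws]
      have hswρ : s - w = ρ := by rw [hwdef]; ring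
      have hexp : 2*α - 2 + 1 = 2*α - 1 := by ring
      rw [hexp, hswρ]
      have hq : (0:ℝ) ≤ (s - a/2) ^ (2*α-1) := Real.rpow_nonneg (by linarith) _
      have hv : ((s - a/2) ^ (2*α-1) - ρ ^ (2*α-1)) / (2*α-1)
          ≤ ρ ^ (2*α-1) / (1-2*α) := by
        have hne : (2*α-1) ≠ 0 := by intro h; linarith
        have hne2 : (1-2*α) ≠ 0 := ne_of_gt h12α
        have e : ((s - a/2) ^ (2*α-1) - ρ ^ (2*α-1)) / (2*α-1)
            = (ρ ^ (2*α-1) - (s - a/2) ^ (2*α-1)) / (1-2*α) := by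
          field_simp
          ring
        rw [e]
        exact (div_le_div_iff_of_pos_right h12α).2 (by linarith [hq])
      have h5 : a/(2*b) * δ ≤ ρ := by
        rw [hρdef]
        apply le_min
        · calc a/(2*b)*δ ≤ 1*δ := by
                apply mul_le_mul_of_nonneg_right ?_ hδ.le
                rw [div_le_one (by positivity)]; linarith
            _ = δ := one_mul δ
        · calc a/(2*b)*δ ≤ a/(2*b)*b := mul_le_mul_of_nonneg_left hδb hab2.le
            _ = a/2 := by field_simp
            _ ≤ s/2 := by linarith
      have step2 : ρ ^ (2*α-1) ≤ (a/(2*b)) ^ (2*α-1) * δ ^ (2*α-1) := by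
        calc ρ ^ (2*α-1) ≤ (a/(2*b) * δ) ^ (2*α-1) :=
              Real.rpow_le_rpow_of_nonpos (by positivity) h5 (by linarith)
          _ = (a/(2*b)) ^ (2*α-1) * δ ^ (2*α-1) := Real.mul_rpow hab2.le hδ.le
      have hmul : δ^2 * δ ^ (2*α-1) = δ ^ (2*α+1) := by
        rw [hδ2rw, ← Real.rpow_add hδ]; congr 1; ring
      calc α ^ 2 * δ ^ 2 * (a/2) ^ (-γ)
            * (((s - a/2) ^ (2*α-1) - ρ ^ (2*α-1)) / (2*α-1))
          ≤ α ^ 2 * δ ^ 2 * (a/2) ^ (-γ) * (ρ ^ (2*α-1) / (1-2*α)) :=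
            mul_le_mul_of_nonneg_left hv (by positivity)
        _ = (α ^ 2 * (a/2) ^ (-γ) / (1-2*α)) * (δ^2 * ρ ^ (2*α-1)) := by ring
        _ ≤ (α ^ 2 * (a/2) ^ (-γ) / (1-2*α))
              * (δ^2 * ((a/(2*b)) ^ (2*α-1) * δ ^ (2*α-1))) := by
            apply mul_le_mul_of_nonneg_left ?_ (by positivity)
            exact mul_le_mul_of_nonneg_left step2 (sq_nonneg δ)
        _ = (α ^ 2 * (a/2) ^ (-γ) * (a/(2*b)) ^ (2*α-1) / (1-2*α))
              * (δ^2 * δ ^ (2*α-1)) := by ring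
        _ = CB2 * δ ^ (2*α+1) := by rw [hmul, hCB2]
    -- region A bound
    have hA : (∫ u in Ico w s, F u) ≤ CA * δ ^ (2*α+1) := by
      refine (setIntegral_mono_on hFiA hgA measurableSet_Ico claimA).trans ?_
      have hswρ : s - w = ρ := by rw [hwdef]; ring
      have hval : (∫ u in Ico w s, (a/2) ^ (-γ) * (4 * δ ^ (2*α) + 2 * (s-u) ^ (2*α)))
          = (a/2) ^ (-γ) * (4 * δ ^ (2*α) * ρ + 2 * (ρ ^ (2*α+1) / (2*α+1))) := by
        rw [MeasureTheory.integral_const_mul]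
        congr 1
        rw [integral_add (integrableOn_const (C := (4 * δ ^ (2*α) : ℝ)) measure_Ico_lt_top.ne)
          (hsubint.const_mul 2)]
        congr 1
        · rw [setIntegral_const, Measure.real, Real.volume_Ico, smul_eq_mul,
            ENNReal.toReal_ofReal (by linarith [hws] : (0:ℝ) ≤ s - w), hswρ]
          ring
        · rw [MeasureTheory.integral_const_mul, integral_Ico_eq_integral_Ioo,
            integral_sub_rpow_Ioo (by linarith) hws.le, hswρ]
      rw [hval]
      have e1 : δ ^ (2*α) * ρ ≤ δ ^ (2*α+1) := by
        rw [Real.rpow_add_one hδ.ne']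
        exact mul_le_mul_of_nonneg_left hρδ (Real.rpow_nonneg hδ.le _)
      have e2 : ρ ^ (2*α+1) ≤ δ ^ (2*α+1) := Real.rpow_le_rpow hρ.le hρδ h2α1.le
      calc (a/2) ^ (-γ) * (4 * δ ^ (2*α) * ρ + 2 * (ρ ^ (2*α+1) / (2*α+1)))
          ≤ (a/2) ^ (-γ) * (4 * δ ^ (2*α+1) + 2 * (δ ^ (2*α+1) / (2*α+1))) := by
            apply mul_le_mul_of_nonneg_left ?_ (Real.rpow_nonneg ha2.le _)
            have e3 : ρ ^ (2*α+1) / (2*α+1) ≤ δ ^ (2*α+1) / (2*α+1) :=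
              (div_le_div_iff_of_pos_right h2α1).2 e2
            linarith [e1]
        _ = CA * δ ^ (2*α+1) := by rw [hCA]; ring
    -- assemble
    have hPhi : Phi α γ s t = (∫ u in Ioo (0:ℝ) s, F u) +
        ∫ u in Ioo s t, (t-u) ^ (2*α) * u ^ (-γ) := rfl
    rw [hPhi, hsplit]
    linarith [hB1, hB2, hA, hI2high]
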